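/- arXiv:2203.10469 — 2 statements merged into one kernel-verified Lean document; each statement's English description precedes it below -/
import Mathlib

section
/- Let m₁ < m₂ be positive integers and α ∈ (0,1) with m₁α and m₂α both integers (and ≥ 1). Define h(t) = F_bin(m₂α−1; m₂−1, t) − F_bin(m₁α−1; m₁−1, t) for t ∈ [0,1]. Then: (i) there exists t₀ ∈ (0,1) such that h(t) > 0 for all t ∈ (0, t₀) and h(t) < 0 for all t ∈ (t₀, 1); and (ii) ∫₀¹ h(t) dt = 0. -/
open MeasureTheory Finset

/-- Binomial CDF: probability of at most `k` successes in `n` trials. -/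
noncomputable def binCDF (k : ℤ) (n : ℕ) (p : ℝ) : ℝ :=
  ∑ j ∈ Finset.range (k + 1).toNat, (n.choose j : ℝ) * p ^ j * (1 - p) ^ (n - j)

set_option maxHeartbeats 1000000

noncomputable def auxF (n k : ℕ) (t : ℝ) : ℝ :=
  ∑ j ∈ Finset.range (k + 1), (n.choose j : ℝ) * t ^ j * (1 - t) ^ (n - j)

lemma binCDF_eq_auxF (K n : ℕ) (hK : 1 ≤ K) (t : ℝ) :
    binCDF ((K : ℤ) - 1) n t = auxF n (K - 1) t := by
  unfold binCDF auxF
  have h1 : ((K : ℤ) - 1 + 1).toNat = K := by omega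
  have h2 : K - 1 + 1 = K := by omega
  rw [h1, h2]



lemma auxTerm_hasDerivAt (N j : ℕ) (hj : j ≤ N) (t : ℝ) :
    HasDerivAt (fun t : ℝ => ((N + 1).choose j : ℝ) * t ^ j * (1 - t) ^ (N + 1 - j))
      ((if j = 0 then 0 else ((N:ℝ) + 1) * (N.choose (j - 1)) * t ^ (j - 1) * (1 - t) ^ (N - (j - 1)))
        - ((N:ℝ) + 1) * (N.choose j) * t ^ j * (1 - t) ^ (N - j)) t := by
  have h1 : HasDerivAt (fun t : ℝ => t ^ j) ((j : ℝ) * t ^ (j - 1)) t := hasDerivAt_pow j t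
  have h2 : HasDerivAt (fun t : ℝ => (1 - t) ^ (N + 1 - j))
      (((N + 1 - j : ℕ) : ℝ) * (1 - t) ^ (N + 1 - j - 1) * (-1)) t :=
    (hasDerivAt_pow (N + 1 - j) (1 - t)).comp t ((hasDerivAt_id t).const_sub 1)
  have h3 := (h1.mul h2).const_mul (((N + 1).choose j : ℝ))
  have hexp : N + 1 - j - 1 = N - j := by omega
  rw [hexp] at h3
  have h4 : (fun t : ℝ => ((N + 1).choose j : ℝ) * t ^ j * (1 - t) ^ (N + 1 - j))
      = fun t : ℝ => ((N + 1).choose j : ℝ) * (t ^ j * (1 - t) ^ (N + 1 - j)) := by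
    funext t; ring
  rw [h4]
  convert h3 using 1
  · rfl
  · rfl
  · rfl
  rcases j with _ | s
  · simp
  · rw [if_neg (Nat.succ_ne_zero s)]
    obtain ⟨M, hM⟩ : ∃ M, N - s = M + 1 := ⟨N - s - 1, by omega⟩
    have e0 : s + 1 - 1 = s := by omega
    have e1 : N + 1 - (s + 1) = M + 1 := by omega
    have e2 : N - (s + 1) = M := by omega
    rw [e0, e1, e2, hM]
    have hI1 : (((N + 1).choose (s + 1) : ℕ) : ℝ) * ((s + 1 : ℕ) : ℝ)
        = ((N : ℝ) + 1) * ((N.choose s : ℕ) : ℝ) := by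
      exact_mod_cast (Nat.add_one_mul_choose_eq N s).symm
    have hI2 : (((N + 1).choose (s + 1) : ℕ) : ℝ) * ((M : ℝ) + 1)
        = ((N : ℝ) + 1) * ((N.choose (s + 1) : ℕ) : ℝ) := by
      have base : (N + 1).choose (s + 1) * (M + 1) = (N + 1) * N.choose (s + 1) := by
        have h5 := Nat.choose_succ_right_eq (N + 1) (s + 1)
        have h6 := Nat.add_one_mul_choose_eq N (s + 1)
        have h7 : N + 1 - (s + 1) = M + 1 := by omega
        rw [h7] at h5
        rw [← h5, ← h6]
      exact_mod_cast base
    push_cast at hI1 hI2 ⊢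
    linear_combination (-(t ^ s * (1 - t) ^ (M + 1))) * hI1 + (t ^ (s + 1) * (1 - t) ^ M) * hI2

lemma auxF_hasDerivAt (n k : ℕ) (hk : k < n) (t : ℝ) :
    HasDerivAt (auxF n k)
      (-(((n : ℝ)) * ((n - 1).choose k)) * (t ^ k * (1 - t) ^ (n - 1 - k))) t := by
  obtain ⟨N, rfl⟩ : ∃ N, n = N + 1 := ⟨n - 1, by omega⟩
  have hkN : k ≤ N := by omega
  have hsum : HasDerivAt (fun t => auxF (N + 1) k t)
      (∑ j ∈ Finset.range (k + 1),
        ((if j = 0 then 0 else ((N:ℝ) + 1) * (N.choose (j - 1)) * t ^ (j - 1) * (1 - t) ^ (N - (j - 1)))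
          - ((N:ℝ) + 1) * (N.choose j) * t ^ j * (1 - t) ^ (N - j))) t := by
    apply HasDerivAt.fun_sum
    intro j hj
    exact auxTerm_hasDerivAt N j (by simp at hj; omega) t
  have hval : (∑ j ∈ Finset.range (k + 1),
      ((if j = 0 then 0 else ((N:ℝ) + 1) * (N.choose (j - 1)) * t ^ (j - 1) * (1 - t) ^ (N - (j - 1)))
        - ((N:ℝ) + 1) * (N.choose j) * t ^ j * (1 - t) ^ (N - j)))
      = -(((N : ℝ) + 1) * (N.choose k)) * (t ^ k * (1 - t) ^ (N - k)) := by
    rw [Finset.sum_sub_distrib]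
    have h1 : (∑ j ∈ Finset.range (k + 1),
        (if j = 0 then (0:ℝ) else ((N:ℝ) + 1) * (N.choose (j - 1)) * t ^ (j - 1) * (1 - t) ^ (N - (j - 1))))
        = ∑ j ∈ Finset.range k, ((N:ℝ) + 1) * (N.choose j) * t ^ j * (1 - t) ^ (N - j) := by
      rw [Finset.sum_range_succ']
      simp
    rw [h1, Finset.sum_range_succ]
    ring
  rw [hval] at hsum
  have : ((N + 1 : ℕ) : ℝ) = (N : ℝ) + 1 := by push_cast; ring
  simp only [Nat.add_sub_cancel]
  convert hsum using 2 <;> push_cast <;> ring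
lemma auxF_zero (n k : ℕ) : auxF n k 0 = 1 := by
  unfold auxF
  rw [Finset.sum_eq_single 0]
  · simp
  · intro j hj hj0
    simp [zero_pow hj0]
  · simp

lemma auxF_one (n k : ℕ) (hk : k < n) : auxF n k 1 = 0 := by
  unfold auxF
  apply Finset.sum_eq_zero
  intro j hj
  simp only [Finset.mem_range] at hj
  have : n - j ≠ 0 := by omega
  simp [zero_pow this]

lemma auxF_continuous (n k : ℕ) : Continuous (auxF n k) := by
  unfold auxF
  exact continuous_finset_sum _ (fun j _ => by fun_prop)

lemma auxF_integral (n k : ℕ) (hk : k < n) :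
    ∫ t in (0:ℝ)..1, auxF n k t = ((k : ℝ) + 1) / ((n : ℝ) + 1) := by
  set H : ℝ → ℝ := fun t => (-(1:ℝ) / ((n:ℝ) + 1)) * ∑ j ∈ Finset.range (k + 1), auxF (n + 1) j t
    with hH
  have hn1 : ((n:ℝ) + 1) ≠ 0 := by positivity
  have hderiv : ∀ t ∈ Set.uIcc (0:ℝ) 1, HasDerivAt H (auxF n k t) t := by
    intro t _
    have hsum : HasDerivAt (fun t => ∑ j ∈ Finset.range (k + 1), auxF (n + 1) j t)
        (∑ j ∈ Finset.range (k + 1),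
          (-(((n:ℝ) + 1) * ((n).choose j)) * (t ^ j * (1 - t) ^ (n - j)))) t := by
      apply HasDerivAt.fun_sum
      intro j hj
      have := auxF_hasDerivAt (n + 1) j (by simp at hj; omega) t
      simpa using this
    have := hsum.const_mul (-(1:ℝ) / ((n:ℝ) + 1))
    convert this using 1
    · rfl
    · rfl
    rw [Finset.mul_sum]
    unfold auxF
    apply Finset.sum_congr rfl
    intro j hj
    field_simp
  have hint : IntervalIntegrable (auxF n k) MeasureTheory.volume 0 1 :=
    (auxF_continuous n k).intervalIntegrable 0 1
  rw [intervalIntegral.integral_eq_sub_of_hasDerivAt hderiv hint]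
  have hH1 : H 1 = 0 := by
    rw [hH]
    simp only
    rw [Finset.sum_eq_zero, mul_zero]
    intro j hj
    exact auxF_one (n + 1) j (by simp at hj; omega)
  have hH0 : H 0 = (-(1:ℝ) / ((n:ℝ) + 1)) * ((k : ℝ) + 1) := by
    rw [hH]
    simp only
    rw [Finset.sum_congr rfl (fun j _ => auxF_zero (n + 1) j)]
    simp
  rw [hH1, hH0]
  field_simp
  ring

lemma psi_hasDerivAt (a b : ℕ) (ha : 1 ≤ a) (hb : 1 ≤ b) (t : ℝ) :
    HasDerivAt (fun t : ℝ => t ^ a * (1 - t) ^ b)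
      (t ^ (a - 1) * (1 - t) ^ (b - 1) * ((a : ℝ) - ((a : ℝ) + (b : ℝ)) * t)) t := by
  have h1 : HasDerivAt (fun t : ℝ => t ^ a) ((a : ℝ) * t ^ (a - 1)) t := hasDerivAt_pow a t
  have h2 : HasDerivAt (fun t : ℝ => (1 - t) ^ b) (((b : ℕ) : ℝ) * (1 - t) ^ (b - 1) * (-1)) t :=
    (hasDerivAt_pow b (1 - t)).comp t ((hasDerivAt_id t).const_sub 1)
  convert h1.mul h2 using 1
  · rfl
  · rfl
  · rfl
  obtain ⟨a', rfl⟩ : ∃ a', a = a' + 1 := ⟨a - 1, by omega⟩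
  obtain ⟨b', rfl⟩ : ∃ b', b = b' + 1 := ⟨b - 1, by omega⟩
  simp only [Nat.add_sub_cancel]
  push_cast
  ring

lemma psi_cont (a b : ℕ) : Continuous (fun t : ℝ => t ^ a * (1 - t) ^ b) := by fun_prop

lemma psi_strictMonoOn (a b : ℕ) (ha : 1 ≤ a) (hb : 1 ≤ b) :
    StrictMonoOn (fun t : ℝ => t ^ a * (1 - t) ^ b)
      (Set.Icc 0 ((a : ℝ) / ((a : ℝ) + (b : ℝ)))) := by
  have hab : (0:ℝ) < (a : ℝ) + (b : ℝ) := by positivity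
  apply strictMonoOn_of_deriv_pos (convex_Icc _ _) (psi_cont a b).continuousOn
  intro x hx
  rw [interior_Icc, Set.mem_Ioo] at hx
  rw [(psi_hasDerivAt a b ha hb x).deriv]
  have hb1 : (1:ℝ) ≤ (b:ℝ) := by exact_mod_cast hb
  have hx1 : x < 1 := by
    have h := hx.2
    rw [lt_div_iff₀ hab] at h
    nlinarith [hx.1]
  have h3 : (0:ℝ) < (a : ℝ) - ((a : ℝ) + (b : ℝ)) * x := by
    have := hx.2
    rw [lt_div_iff₀ hab] at this
    linarith
  have h1 : (0:ℝ) < x ^ (a - 1) := pow_pos hx.1 _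
  have h2 : (0:ℝ) < (1 - x) ^ (b - 1) := pow_pos (by linarith) _
  positivity

lemma psi_strictAntiOn (a b : ℕ) (ha : 1 ≤ a) (hb : 1 ≤ b) :
    StrictAntiOn (fun t : ℝ => t ^ a * (1 - t) ^ b)
      (Set.Icc ((a : ℝ) / ((a : ℝ) + (b : ℝ))) 1) := by
  have hab : (0:ℝ) < (a : ℝ) + (b : ℝ) := by positivity
  have ha0 : (0:ℝ) < (a:ℝ) := by exact_mod_cast Nat.lt_of_lt_of_le Nat.zero_lt_one ha
  apply strictAntiOn_of_deriv_neg (convex_Icc _ _) (psi_cont a b).continuousOn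
  intro x hx
  rw [interior_Icc, Set.mem_Ioo] at hx
  rw [(psi_hasDerivAt a b ha hb x).deriv]
  have hc0 : (0:ℝ) < (a : ℝ) / ((a : ℝ) + (b : ℝ)) := div_pos ha0 hab
  have hx0 : 0 < x := lt_trans hc0 hx.1
  have h3 : (a : ℝ) - ((a : ℝ) + (b : ℝ)) * x < 0 := by
    have := hx.1
    rw [div_lt_iff₀ hab] at this
    linarith
  have h1 : (0:ℝ) < x ^ (a - 1) := pow_pos hx0 _
  have h2 : (0:ℝ) < (1 - x) ^ (b - 1) := pow_pos (by linarith [hx.2]) _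
  exact mul_neg_of_pos_of_neg (mul_pos h1 h2) h3

lemma crossing (n₁ k₁ n₂ k₂ a b : ℕ)
    (hk₁ : k₁ < n₁) (hk₂ : k₂ < n₂)
    (ha : 1 ≤ a) (hb : 1 ≤ b)
    (hka : k₂ = k₁ + a) (heb : n₂ - 1 - k₂ = (n₁ - 1 - k₁) + b) :
    ∃ t₀ ∈ Set.Ioo (0:ℝ) 1,
      (∀ t ∈ Set.Ioo (0:ℝ) t₀, 0 < auxF n₂ k₂ t - auxF n₁ k₁ t) ∧
      (∀ t ∈ Set.Ioo t₀ (1:ℝ), auxF n₂ k₂ t - auxF n₁ k₁ t < 0) := by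
  set g : ℝ → ℝ := fun t => auxF n₂ k₂ t - auxF n₁ k₁ t with hg
  set A : ℝ := (n₁ : ℝ) * ((n₁ - 1).choose k₁) with hA
  set B : ℝ := (n₂ : ℝ) * ((n₂ - 1).choose k₂) with hB
  set ψ : ℝ → ℝ := fun t => t ^ a * (1 - t) ^ b with hψ
  set S : ℝ → ℝ := fun t => A - B * ψ t with hS
  set e₁ : ℕ := n₁ - 1 - k₁ with he₁
  have hAp : 0 < A := by
    rw [hA]
    have h1 : 0 < n₁ := by omega
    have h2 : 0 < (n₁ - 1).choose k₁ := Nat.choose_pos (by omega)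
    exact mul_pos (by exact_mod_cast h1) (by exact_mod_cast h2)
  have hBp : 0 < B := by
    rw [hB]
    have h1 : 0 < n₂ := by omega
    have h2 : 0 < (n₂ - 1).choose k₂ := Nat.choose_pos (by omega)
    exact mul_pos (by exact_mod_cast h1) (by exact_mod_cast h2)
  have hder : ∀ t : ℝ, HasDerivAt g (t ^ k₁ * (1 - t) ^ e₁ * S t) t := by
    intro t
    have h2 := auxF_hasDerivAt n₂ k₂ hk₂ t
    have h1 := auxF_hasDerivAt n₁ k₁ hk₁ t
    have := h2.sub h1
    convert this using 1
    · rfl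
    · rfl
    · rfl
    simp only [hS, hψ, hA, hB]
    rw [heb, hka, he₁]
    rw [pow_add, pow_add]
    ring
  have hcont : Continuous g := (auxF_continuous n₂ k₂).sub (auxF_continuous n₁ k₁)
  have hg0 : g 0 = 0 := by rw [hg]; simp [auxF_zero]
  have hg1 : g 1 = 0 := by rw [hg]; simp [auxF_one n₂ k₂ hk₂, auxF_one n₁ k₁ hk₁]
  set c : ℝ := (a : ℝ) / ((a : ℝ) + (b : ℝ)) with hc
  have hab : (0:ℝ) < (a : ℝ) + (b : ℝ) := by positivity
  have ha1 : (1:ℝ) ≤ (a:ℝ) := by exact_mod_cast ha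
  have hb1 : (1:ℝ) ≤ (b:ℝ) := by exact_mod_cast hb
  have hc0 : 0 < c := div_pos (by linarith) hab
  have hc1 : c < 1 := by rw [hc, div_lt_one hab]; linarith
  have hScont : Continuous S := by
    rw [hS]
    exact continuous_const.sub (continuous_const.mul (psi_cont a b))
  have hψ0 : ψ 0 = 0 := by rw [hψ]; simp [zero_pow (by omega : a ≠ 0)]
  have hψ1 : ψ 1 = 0 := by rw [hψ]; simp [zero_pow (by omega : b ≠ 0)]
  have hS0 : S 0 = A := by rw [hS]; simp [hψ0]
  have hS1 : S 1 = A := by rw [hS]; simp [hψ1]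
  -- positivity of the prefactor
  have hpre : ∀ x : ℝ, 0 < x → x < 1 → (0:ℝ) < x ^ k₁ * (1 - x) ^ e₁ :=
    fun x hx hx1 => mul_pos (pow_pos hx _) (pow_pos (by linarith) _)
  -- Step 1 : S c < 0
  have hSc : S c < 0 := by
    by_contra hge
    push_neg at hge
    have hmono : StrictMonoOn g (Set.Icc 0 c) := by
      apply strictMonoOn_of_deriv_pos (convex_Icc _ _) hcont.continuousOn
      intro x hx
      rw [interior_Icc, Set.mem_Ioo] at hx
      rw [(hder x).deriv]
      have hψlt : ψ x < ψ c := psi_strictMonoOn a b ha hb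
        ⟨le_of_lt hx.1, le_of_lt hx.2⟩ ⟨le_of_lt hc0, le_refl c⟩ hx.2
      have hSx : 0 < S x := by
        rw [hS]; simp only
        rw [hS] at hge; simp only at hge
        nlinarith
      exact mul_pos (hpre x hx.1 (hx.2.trans hc1)) hSx
    have hgc : 0 < g c := by
      have := hmono ⟨le_refl 0, le_of_lt hc0⟩ ⟨le_of_lt hc0, le_refl c⟩ hc0
      rw [hg0] at this; exact this
    have hmono2 : MonotoneOn g (Set.Icc c 1) := by
      apply monotoneOn_of_deriv_nonneg (convex_Icc _ _) hcont.continuousOn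
      · intro x hx
        exact (hder x).differentiableAt.differentiableWithinAt
      · intro x hx
        rw [interior_Icc, Set.mem_Ioo] at hx
        rw [(hder x).deriv]
        have hψlt : ψ x < ψ c := psi_strictAntiOn a b ha hb
          ⟨le_refl c, le_of_lt hc1⟩ ⟨le_of_lt hx.1, le_of_lt hx.2⟩ hx.1
        have hSx : 0 < S x := by
          rw [hS]; simp only
          rw [hS] at hge; simp only at hge
          nlinarith
        exact le_of_lt (mul_pos (hpre x (hc0.trans hx.1) hx.2) hSx)
    have : g c ≤ g 1 := hmono2 ⟨le_refl c, le_of_lt hc1⟩ ⟨le_of_lt hc1, le_refl 1⟩ (le_of_lt hc1)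
    rw [hg1] at this
    linarith
  -- Step 2 : roots of S
  obtain ⟨t₁, ht₁mem, ht₁⟩ : ∃ t₁ ∈ Set.Ioo (0:ℝ) c, S t₁ = 0 := by
    have := intermediate_value_Ioo' (le_of_lt hc0) hScont.continuousOn
      (by rw [hS0]; exact Set.mem_Ioo.mpr ⟨hSc, hAp⟩ : (0:ℝ) ∈ Set.Ioo (S c) (S 0))
    obtain ⟨t₁, h1, h2⟩ := this
    exact ⟨t₁, h1, h2⟩
  obtain ⟨t₂, ht₂mem, ht₂⟩ : ∃ t₂ ∈ Set.Ioo c (1:ℝ), S t₂ = 0 := by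
    have := intermediate_value_Ioo (le_of_lt hc1) hScont.continuousOn
      (by rw [hS1]; exact Set.mem_Ioo.mpr ⟨hSc, hAp⟩ : (0:ℝ) ∈ Set.Ioo (S c) (S 1))
    obtain ⟨t₂, h1, h2⟩ := this
    exact ⟨t₂, h1, h2⟩
  have hψt₁ : B * ψ t₁ = A := by rw [hS] at ht₁; simp only at ht₁; linarith
  have hψt₂ : B * ψ t₂ = A := by rw [hS] at ht₂; simp only at ht₂; linarith
  -- sign facts for S
  have sign1 : ∀ t ∈ Set.Ioo (0:ℝ) t₁, 0 < S t := by
    intro t ht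
    have hψlt : ψ t < ψ t₁ := psi_strictMonoOn a b ha hb
      ⟨le_of_lt ht.1, le_of_lt (ht.2.trans ht₁mem.2)⟩
      ⟨le_of_lt ht₁mem.1, le_of_lt ht₁mem.2⟩ ht.2
    rw [hS]; simp only
    nlinarith
  have sign2 : ∀ t ∈ Set.Ioo t₁ t₂, S t < 0 := by
    intro t ht
    rcases le_or_gt t c with htc | htc
    · have hψgt : ψ t₁ < ψ t := psi_strictMonoOn a b ha hb
        ⟨le_of_lt ht₁mem.1, le_of_lt ht₁mem.2⟩
        ⟨le_of_lt (ht₁mem.1.trans ht.1), htc⟩ ht.1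
      rw [hS]; simp only
      nlinarith
    · have hψgt : ψ t₂ < ψ t := psi_strictAntiOn a b ha hb
        ⟨le_of_lt htc, le_of_lt (ht.2.trans ht₂mem.2)⟩
        ⟨le_of_lt ht₂mem.1, le_of_lt ht₂mem.2⟩ ht.2
      rw [hS]; simp only
      nlinarith
  have sign3 : ∀ t ∈ Set.Ioo t₂ (1:ℝ), 0 < S t := by
    intro t ht
    have hψlt : ψ t < ψ t₂ := psi_strictAntiOn a b ha hb
      ⟨le_of_lt ht₂mem.1, le_of_lt ht₂mem.2⟩
      ⟨le_of_lt (ht₂mem.1.trans ht.1), le_of_lt ht.2⟩ ht.1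
    rw [hS]; simp only
    nlinarith
  have ht₁1 : t₁ < 1 := ht₁mem.2.trans hc1
  have ht₂0 : 0 < t₂ := hc0.trans ht₂mem.1
  have ht₁t₂ : t₁ < t₂ := ht₁mem.2.trans ht₂mem.1
  -- monotonicity of g
  have m1 : StrictMonoOn g (Set.Icc 0 t₁) := by
    apply strictMonoOn_of_deriv_pos (convex_Icc _ _) hcont.continuousOn
    intro x hx
    rw [interior_Icc, Set.mem_Ioo] at hx
    rw [(hder x).deriv]
    exact mul_pos (hpre x hx.1 (hx.2.trans ht₁1)) (sign1 x ⟨hx.1, hx.2⟩)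
  have m2 : StrictAntiOn g (Set.Icc t₁ t₂) := by
    apply strictAntiOn_of_deriv_neg (convex_Icc _ _) hcont.continuousOn
    intro x hx
    rw [interior_Icc, Set.mem_Ioo] at hx
    rw [(hder x).deriv]
    exact mul_neg_of_pos_of_neg
      (hpre x (ht₁mem.1.trans hx.1) (hx.2.trans ht₂mem.2)) (sign2 x ⟨hx.1, hx.2⟩)
  have m3 : StrictMonoOn g (Set.Icc t₂ 1) := by
    apply strictMonoOn_of_deriv_pos (convex_Icc _ _) hcont.continuousOn
    intro x hx
    rw [interior_Icc, Set.mem_Ioo] at hx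
    rw [(hder x).deriv]
    exact mul_pos (hpre x (ht₂0.trans hx.1) hx.2) (sign3 x ⟨hx.1, hx.2⟩)
  have hgt₁ : 0 < g t₁ := by
    have := m1 ⟨le_refl 0, le_of_lt ht₁mem.1⟩ ⟨le_of_lt ht₁mem.1, le_refl t₁⟩ ht₁mem.1
    rw [hg0] at this; exact this
  have hgt₂ : g t₂ < 0 := by
    have := m3 ⟨le_refl t₂, le_of_lt ht₂mem.2⟩ ⟨le_of_lt ht₂mem.2, le_refl 1⟩ ht₂mem.2
    rw [hg1] at this; exact this
  -- the crossing point
  obtain ⟨t₀, ht₀mem, ht₀⟩ : ∃ t₀ ∈ Set.Ioo t₁ t₂, g t₀ = 0 := by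
    have := intermediate_value_Ioo' (le_of_lt ht₁t₂) hcont.continuousOn
      (Set.mem_Ioo.mpr ⟨hgt₂, hgt₁⟩ : (0:ℝ) ∈ Set.Ioo (g t₂) (g t₁))
    obtain ⟨t₀, h1, h2⟩ := this
    exact ⟨t₀, h1, h2⟩
  refine ⟨t₀, ⟨ht₁mem.1.trans ht₀mem.1, ht₀mem.2.trans ht₂mem.2⟩, ?_, ?_⟩
  · intro t ht
    rcases le_or_gt t t₁ with htle | htgt
    · have := m1 ⟨le_refl 0, le_of_lt ht₁mem.1⟩ ⟨le_of_lt ht.1, htle⟩ ht.1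
      rw [hg0] at this; exact this
    · have := m2 ⟨le_of_lt htgt, le_of_lt (ht.2.trans ht₀mem.2)⟩
        ⟨le_of_lt ht₀mem.1, le_of_lt ht₀mem.2⟩ ht.2
      rw [ht₀] at this; exact this
  · intro t ht
    rcases le_or_gt t t₂ with htle | htgt
    · have := m2 ⟨le_of_lt ht₀mem.1, le_of_lt ht₀mem.2⟩
        ⟨le_of_lt (ht₀mem.1.trans ht.1), htle⟩ ht.1
      rw [ht₀] at this; exact this
    · have := m3 ⟨le_of_lt htgt, le_of_lt ht.2⟩ ⟨le_of_lt ht₂mem.2, le_refl 1⟩ ht.2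
      rw [hg1] at this; exact this

theorem h_single_crossing (m₁ m₂ K₁ K₂ : ℕ) (hm₁ : 0 < m₁) (hm : m₁ < m₂)
    (α : ℝ) (hα : α ∈ Set.Ioo (0 : ℝ) 1)
    (hK₁ : (K₁ : ℝ) = (m₁ : ℝ) * α) (hK₂ : (K₂ : ℝ) = (m₂ : ℝ) * α)
    (hK₁pos : 1 ≤ K₁) (hK₂pos : 1 ≤ K₂) :
    (∃ t₀ ∈ Set.Ioo (0 : ℝ) 1,
      (∀ t ∈ Set.Ioo (0 : ℝ) t₀,
        0 < binCDF ((K₂ : ℤ) - 1) (m₂ - 1) t - binCDF ((K₁ : ℤ) - 1) (m₁ - 1) t) ∧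
      (∀ t ∈ Set.Ioo t₀ (1 : ℝ),
        binCDF ((K₂ : ℤ) - 1) (m₂ - 1) t - binCDF ((K₁ : ℤ) - 1) (m₁ - 1) t < 0)) ∧
    (∫ t in (0 : ℝ)..1,
        (binCDF ((K₂ : ℤ) - 1) (m₂ - 1) t - binCDF ((K₁ : ℤ) - 1) (m₁ - 1) t)) = 0 := by
  obtain ⟨hα0, hα1⟩ := hα
  have hm₂ : 0 < m₂ := lt_trans hm₁ hm
  -- K₁ < m₁ and K₂ < m₂
  have hK₁m : K₁ < m₁ := by
    have : (K₁ : ℝ) < (m₁ : ℝ) := by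
      rw [hK₁]
      have hm₁R : (0:ℝ) < (m₁ : ℝ) := by exact_mod_cast hm₁
      nlinarith
    exact_mod_cast this
  have hK₂m : K₂ < m₂ := by
    have : (K₂ : ℝ) < (m₂ : ℝ) := by
      rw [hK₂]
      have hm₂R : (0:ℝ) < (m₂ : ℝ) := by exact_mod_cast hm₂
      nlinarith
    exact_mod_cast this
  have hK₁K₂ : K₁ < K₂ := by
    have : (K₁ : ℝ) < (K₂ : ℝ) := by
      rw [hK₁, hK₂]
      have : (m₁ : ℝ) < (m₂ : ℝ) := by exact_mod_cast hm
      nlinarith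
    exact_mod_cast this
  have hd : m₁ - K₁ < m₂ - K₂ := by
    have h1 : ((m₁ - K₁ : ℕ) : ℝ) = (m₁ : ℝ) - K₁ := by
      push_cast [Nat.cast_sub (le_of_lt hK₁m)]; ring
    have h2 : ((m₂ - K₂ : ℕ) : ℝ) = (m₂ : ℝ) - K₂ := by
      push_cast [Nat.cast_sub (le_of_lt hK₂m)]; ring
    have h3 : ((m₁ - K₁ : ℕ) : ℝ) < ((m₂ - K₂ : ℕ) : ℝ) := by
      rw [h1, h2, hK₁, hK₂]
      have : (m₁ : ℝ) < (m₂ : ℝ) := by exact_mod_cast hm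
      nlinarith
    exact_mod_cast h3
  have hk₁ : K₁ - 1 < m₁ - 1 := by omega
  have hk₂ : K₂ - 1 < m₂ - 1 := by omega
  -- rewrite binCDF as auxF
  have hrw₁ : ∀ t : ℝ, binCDF ((K₁ : ℤ) - 1) (m₁ - 1) t = auxF (m₁ - 1) (K₁ - 1) t :=
    binCDF_eq_auxF K₁ (m₁ - 1) hK₁pos
  have hrw₂ : ∀ t : ℝ, binCDF ((K₂ : ℤ) - 1) (m₂ - 1) t = auxF (m₂ - 1) (K₂ - 1) t :=
    binCDF_eq_auxF K₂ (m₂ - 1) hK₂pos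
  constructor
  · -- single crossing
    obtain ⟨t₀, ht₀, hpos, hneg⟩ := crossing (m₁ - 1) (K₁ - 1) (m₂ - 1) (K₂ - 1)
      (K₂ - K₁) ((m₂ - K₂) - (m₁ - K₁)) hk₁ hk₂ (by omega) (by omega) (by omega) (by omega)
    refine ⟨t₀, ht₀, ?_, ?_⟩
    · intro t ht
      rw [hrw₁ t, hrw₂ t]
      exact hpos t ht
    · intro t ht
      rw [hrw₁ t, hrw₂ t]
      exact hneg t ht
  · -- integral is zero
    have hi₂ : IntervalIntegrable (auxF (m₂ - 1) (K₂ - 1)) MeasureTheory.volume 0 1 :=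
      (auxF_continuous _ _).intervalIntegrable 0 1
    have hi₁ : IntervalIntegrable (auxF (m₁ - 1) (K₁ - 1)) MeasureTheory.volume 0 1 :=
      (auxF_continuous _ _).intervalIntegrable 0 1
    have : (∫ t in (0 : ℝ)..1,
        (binCDF ((K₂ : ℤ) - 1) (m₂ - 1) t - binCDF ((K₁ : ℤ) - 1) (m₁ - 1) t))
        = (∫ t in (0 : ℝ)..1, auxF (m₂ - 1) (K₂ - 1) t)
          - ∫ t in (0 : ℝ)..1, auxF (m₁ - 1) (K₁ - 1) t := by
      rw [← intervalIntegral.integral_sub hi₂ hi₁]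
      apply intervalIntegral.integral_congr
      intro t _
      show binCDF ((K₂ : ℤ) - 1) (m₂ - 1) t - binCDF ((K₁ : ℤ) - 1) (m₁ - 1) t
        = auxF (m₂ - 1) (K₂ - 1) t - auxF (m₁ - 1) (K₁ - 1) t
      rw [hrw₁ t, hrw₂ t]
    rw [this, auxF_integral _ _ hk₂, auxF_integral _ _ hk₁]
    have c₁ : ((K₁ - 1 : ℕ) : ℝ) + 1 = (K₁ : ℝ) := by
      push_cast [Nat.cast_sub hK₁pos]; ring
    have c₂ : ((K₂ - 1 : ℕ) : ℝ) + 1 = (K₂ : ℝ) := by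
      push_cast [Nat.cast_sub hK₂pos]; ring
    have d₁ : ((m₁ - 1 : ℕ) : ℝ) + 1 = (m₁ : ℝ) := by
      push_cast [Nat.cast_sub hm₁]; ring
    have d₂ : ((m₂ - 1 : ℕ) : ℝ) + 1 = (m₂ : ℝ) := by
      push_cast [Nat.cast_sub hm₂]; ring
    rw [c₁, c₂, d₁, d₂, hK₁, hK₂]
    have hm₁0 : (m₁ : ℝ) ≠ 0 := by positivity
    have hm₂0 : (m₂ : ℝ) ≠ 0 := by
      have : (0:ℝ) < (m₂ : ℝ) := by exact_mod_cast hm₂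
      positivity
    field_simp
    ring
end

section
/- Let m > 0, α ∈ (0,1), Θ > 0, and let m₁ < m₂ be positive integers such that m₁α and m₂α are both positive integers. Define P(Θ, m; α) = ∫_ℝ F_bin(⌊mα⌋−1; m−1, Φ(z−Θ)) φ(z) dz. Then P(Θ, m₁; α) < P(Θ, m₂; α). -/
open MeasureTheory Finset

/-- Standard normal density. -/
noncomputable def stdPdf (z : ℝ) : ℝ := (Real.sqrt (2 * Real.pi))⁻¹ * Real.exp (-z ^ 2 / 2)

/-- Standard normal CDF. -/
noncomputable def stdCdf (z : ℝ) : ℝ := ∫ u in Set.Iic z, stdPdf u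

/-- Power of the randomization test: `P(Θ, m; α)`. -/
noncomputable def power (Θ : ℝ) (m : ℕ) (α : ℝ) : ℝ :=
  ∫ z : ℝ, binCDF (⌊(m : ℝ) * α⌋ - 1) (m - 1) (stdCdf (z - Θ)) * stdPdf z


open Filter Real Set Topology

lemma stdPdf_pos (z : ℝ) : 0 < stdPdf z := by
  apply mul_pos (inv_pos.2 (Real.sqrt_pos.2 (by positivity))) (Real.exp_pos _)

lemma stdPdf_continuous : Continuous stdPdf := by
  unfold stdPdf; fun_prop

lemma stdPdf_integrable : Integrable stdPdf := by
  have h : Integrable (fun z : ℝ => Real.exp (-(1/2) * z ^ 2)) := integrable_exp_neg_mul_sq (by norm_num)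
  have : stdPdf = fun z => (Real.sqrt (2 * Real.pi))⁻¹ * Real.exp (-(1/2) * z ^ 2) := by
    funext z; unfold stdPdf; ring_nf
  rw [this]
  exact h.const_mul _

lemma stdPdf_integral : ∫ z, stdPdf z = 1 := by
  have h := integral_gaussian (1/2 : ℝ)
  unfold stdPdf
  rw [MeasureTheory.integral_const_mul]
  have : (fun z : ℝ => Real.exp (-z ^ 2 / 2)) = fun z : ℝ => Real.exp (-(1/2) * z ^ 2) := by
    funext z; ring_nf
  rw [this, h]
  rw [show Real.pi / (1/2) = 2 * Real.pi by ring]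
  rw [inv_mul_cancel₀ (by positivity)]

lemma stdCdf_nonneg (z : ℝ) : 0 ≤ stdCdf z :=
  integral_nonneg fun u => (stdPdf_pos u).le

lemma stdCdf_le_one (z : ℝ) : stdCdf z ≤ 1 := by
  rw [← stdPdf_integral]
  exact setIntegral_le_integral stdPdf_integrable (Eventually.of_forall fun u => (stdPdf_pos u).le)

lemma stdCdf_mono : Monotone stdCdf := fun a b hab =>
  setIntegral_mono_set stdPdf_integrable.integrableOn
    (Eventually.of_forall fun u => (stdPdf_pos u).le)
    (HasSubset.Subset.eventuallyLE (Iic_subset_Iic.2 hab))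

lemma stdCdf_hasDerivAt (x : ℝ) : HasDerivAt stdCdf (stdPdf x) x := by
  have key : ∀ u : ℝ, stdCdf u = (∫ t in (0:ℝ)..u, stdPdf t) + stdCdf 0 := by
    intro u
    have := intervalIntegral.integral_Iic_sub_Iic (f := stdPdf) (μ := volume) (a := 0) (b := u)
      stdPdf_integrable.integrableOn stdPdf_integrable.integrableOn
    unfold stdCdf
    linarith
  have h : HasDerivAt (fun u => (∫ t in (0:ℝ)..u, stdPdf t) + stdCdf 0) (stdPdf x) x := by
    apply HasDerivAt.add_const
    exact intervalIntegral.integral_hasDerivAt_right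
      (stdPdf_integrable.intervalIntegrable)
      (stdPdf_continuous.stronglyMeasurableAtFilter _ _)
      stdPdf_continuous.continuousAt
  exact h.congr_deriv rfl |>.congr_of_eventuallyEq (Eventually.of_forall fun u => (key u)) |>.congr_deriv rfl

lemma stdCdf_continuous : Continuous stdCdf :=
  continuous_iff_continuousAt.2 fun x => (stdCdf_hasDerivAt x).continuousAt

lemma tendsto_stdCdf_atTop : Tendsto stdCdf atTop (𝓝 1) := by
  have h := tendsto_setIntegral_of_monotone (μ := (volume : Measure ℝ)) (f := stdPdf)
    (s := fun x : ℝ => Iic x) (fun i => measurableSet_Iic)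
    (fun a b hab => Iic_subset_Iic.2 hab)
    (by rw [iUnion_Iic]; exact stdPdf_integrable.integrableOn)
  rw [iUnion_Iic] at h
  rw [show (1:ℝ) = ∫ x in (univ : Set ℝ), stdPdf x by rw [setIntegral_univ, stdPdf_integral]]
  exact h

lemma tendsto_stdCdf_atBot : Tendsto stdCdf atBot (𝓝 0) := by
  have h := tendsto_setIntegral_of_antitone (μ := (volume : Measure ℝ)) (f := stdPdf)
    (s := fun x : ℝ => Iic (-x)) (fun i => measurableSet_Iic)
    (fun a b hab => Iic_subset_Iic.2 (neg_le_neg hab))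
    ⟨0, stdPdf_integrable.integrableOn⟩
  have he : (⋂ x : ℝ, Iic (-x)) = (∅ : Set ℝ) := by
    ext y; simp only [mem_iInter, Set.mem_Iic, mem_empty_iff_false, iff_false, not_forall, not_le]
    exact ⟨-(y - 1), by linarith⟩
  rw [he] at h
  simp only [Measure.restrict_empty, integral_zero_measure] at h
  have : Tendsto (fun x : ℝ => -x) atBot atTop := tendsto_neg_atBot_atTop
  have h2 := h.comp this
  have : ((fun i => ∫ (x : ℝ) in Set.Iic (-i), stdPdf x) ∘ fun x : ℝ => -x) = stdCdf := by
    funext x; simp [stdCdf, Function.comp]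
  rwa [this] at h2

noncomputable def S (K n : ℕ) (p : ℝ) : ℝ :=
  ∑ j ∈ Finset.range K, (n.choose j : ℝ) * p ^ j * (1 - p) ^ (n - j)

lemma S_zero_val (K n : ℕ) (hK : 1 ≤ K) : S K n 0 = 1 := by
  unfold S
  rw [Finset.sum_eq_single 0]
  · simp
  · intro j _ hj
    simp [zero_pow hj]
  · intro h
    exact absurd (Finset.mem_range.2 hK) h

lemma S_one_val (K n : ℕ) (hK : K ≤ n) : S K n 1 = 0 := by
  unfold S
  apply Finset.sum_eq_zero
  intro j hj
  have : n - j ≠ 0 := by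
    have := Finset.mem_range.1 hj; omega
  simp [this, zero_pow this]

lemma S_nonneg (K n : ℕ) {p : ℝ} (h0 : 0 ≤ p) (h1 : p ≤ 1) : 0 ≤ S K n p := by
  apply Finset.sum_nonneg
  intro j _
  have : 0 ≤ 1 - p := by linarith
  positivity

lemma S_le_one (K n : ℕ) (hK : K ≤ n + 1) {p : ℝ} (h0 : 0 ≤ p) (h1 : p ≤ 1) : S K n p ≤ 1 := by
  have hbin := add_pow p (1 - p) n
  simp only [add_sub_cancel, one_pow] at hbin
  calc S K n p ≤ ∑ j ∈ Finset.range (n + 1), (n.choose j : ℝ) * p ^ j * (1 - p) ^ (n - j) := by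
        apply Finset.sum_le_sum_of_subset_of_nonneg (Finset.range_subset_range.2 hK)
        intro j _ _
        have : 0 ≤ 1 - p := by linarith
        positivity
    _ = ∑ j ∈ Finset.range (n + 1), p ^ j * (1 - p) ^ (n - j) * (n.choose j : ℝ) := by
        apply Finset.sum_congr rfl; intros; ring
    _ = 1 := hbin.symm

lemma S_continuous (K n : ℕ) : Continuous (S K n) := by
  unfold S; fun_prop

lemma hasDerivAt_S (k n : ℕ) (hk : k + 1 ≤ n) (t : ℝ) :
    HasDerivAt (S (k + 1) n)
      (-(((n - k) * n.choose k : ℕ) : ℝ) * t ^ k * (1 - t) ^ (n - (k + 1))) t := by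
  induction k with
  | zero =>
    have hS : S 1 n = fun p : ℝ => (1 - p) ^ n := by
      funext p; simp [S]
    rw [hS]
    have h2 : HasDerivAt (fun p : ℝ => (1 - p) ^ n)
        ((n : ℝ) * (1 - t) ^ (n - 1) * (-1)) t :=
      (hasDerivAt_pow n (1 - t)).comp t ((hasDerivAt_id t).const_sub 1)
    convert h2 using 1
    simp only [Nat.sub_zero, Nat.choose_zero_right, Nat.mul_one, pow_zero]
    push_cast
    ring
  | succ k ih =>
    have hk' : k + 1 ≤ n := by omega
    have IH := ih hk'
    have hterm : HasDerivAt (fun p : ℝ => (n.choose (k+1) : ℝ) * p ^ (k+1) * (1 - p) ^ (n - (k+1)))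
        ((n.choose (k+1) : ℝ) * ((k+1) * t ^ k) * (1 - t) ^ (n - (k+1))
          + (n.choose (k+1) : ℝ) * t ^ (k+1) *
            ((n - (k+1) : ℕ) * (1 - t) ^ (n - (k+1) - 1) * (-1))) t := by
      have h1 : HasDerivAt (fun p : ℝ => (n.choose (k+1) : ℝ) * p ^ (k+1))
          ((n.choose (k+1) : ℝ) * ((k+1) * t ^ k)) t := by
        have := (hasDerivAt_pow (k+1) t).const_mul (n.choose (k+1) : ℝ)
        simpa using this
      have h2 : HasDerivAt (fun p : ℝ => (1 - p) ^ (n - (k+1)))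
          (((n - (k+1) : ℕ) : ℝ) * (1 - t) ^ (n - (k+1) - 1) * (-1)) t :=
        (hasDerivAt_pow (n - (k+1)) (1 - t)).comp t ((hasDerivAt_id t).const_sub 1)
      exact h1.mul h2
    have hsum := IH.add hterm
    have hSeq : S (k + 2) n = fun p => S (k+1) n p
        + (n.choose (k+1) : ℝ) * p ^ (k+1) * (1 - p) ^ (n - (k+1)) := by
      funext p
      unfold S
      rw [Finset.sum_range_succ]
    rw [hSeq]
    refine hsum.congr_deriv (Eq.symm ?_)
    -- arithmetic: coefficients
    obtain ⟨a, rfl⟩ : ∃ a, n = k + 2 + a := ⟨n - (k + 2), by omega⟩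
    have e1 : k + 2 + a - (k + 1) = a + 1 := by omega
    have e2 : k + 2 + a - (k + 1 + 1) = a := by omega
    have e3 : k + 2 + a - k = a + 2 := by omega
    have e4 : k + 2 + a - (k + 1) - 1 = a := by omega
    rw [e2, e3, e4, e1]
    have hch : ((k + 2 + a).choose (k + 1) * (k + 1) : ℝ) = ((k + 2 + a).choose k : ℝ) * (a + 2) := by
      have := Nat.choose_succ_right_eq (k + 2 + a) k
      have h2 : k + 2 + a - k = a + 2 := by omega
      rw [h2] at this
      exact_mod_cast congrArg (Nat.cast : ℕ → ℝ) this
    push_cast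
    push_cast at hch
    linear_combination (-(t ^ k * (1 - t) ^ (a + 1))) * hch

lemma S_comp_integrable (K n : ℕ) (hK : K ≤ n + 1) :
    Integrable (fun z => S K n (stdCdf z) * stdPdf z) := by
  apply Integrable.mono' stdPdf_integrable
  · exact (((S_continuous K n).comp stdCdf_continuous).mul stdPdf_continuous).aestronglyMeasurable
  · refine Eventually.of_forall fun z => ?_
    rw [Real.norm_eq_abs, abs_mul, abs_of_nonneg (stdPdf_pos z).le,
      abs_of_nonneg (S_nonneg K n (stdCdf_nonneg z) (stdCdf_le_one z))]
    have := S_le_one K n hK (stdCdf_nonneg z) (stdCdf_le_one z)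
    nlinarith [stdPdf_pos z]

lemma integral_S_comp (K n : ℕ) (hK1 : 1 ≤ K) (hKn : K ≤ n) :
    ∫ z, S K n (stdCdf z) * stdPdf z = K / (n + 1) := by
  set G : ℝ → ℝ := fun t => -(1 / (n + 1 : ℝ)) * ∑ j ∈ Finset.range K, S (j + 1) (n + 1) t
    with hG
  have hderiv : ∀ z, HasDerivAt (fun z => G (stdCdf z)) (S K n (stdCdf z) * stdPdf z) z := by
    intro z
    have hsum : HasDerivAt (fun t => ∑ j ∈ Finset.range K, S (j + 1) (n + 1) t)
        (∑ j ∈ Finset.range K,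
          (-(((n + 1 - j) * (n + 1).choose j : ℕ) : ℝ) * (stdCdf z) ^ j
            * (1 - stdCdf z) ^ (n - j))) (stdCdf z) := by
      apply HasDerivAt.fun_sum
      intro j hj
      have hj' : j + 1 ≤ n + 1 := by have := Finset.mem_range.1 hj; omega
      have := hasDerivAt_S j (n + 1) hj' (stdCdf z)
      simpa using this
    have hcomp := (hsum.comp z (stdCdf_hasDerivAt z)).const_mul (-(1 / (n + 1 : ℝ)))
    refine hcomp.congr_deriv (Eq.symm ?_)
    rw [Finset.sum_mul, Finset.mul_sum]
    unfold S
    rw [Finset.sum_mul]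
    apply Finset.sum_congr rfl
    intro j hj
    have hjn : j ≤ n := by have := Finset.mem_range.1 hj; omega
    have hch : ((n + 1 - j) * (n + 1).choose j : ℕ) = ((n + 1) * n.choose j : ℕ) := by
      calc (n + 1 - j) * (n + 1).choose j = (n + 1).choose j * (n + 1 - j) := Nat.mul_comm _ _
        _ = (n + 1).choose (j + 1) * (j + 1) := (Nat.choose_succ_right_eq (n + 1) j).symm
        _ = Nat.succ n * n.choose j := (Nat.add_one_mul_choose_eq n j).symm
        _ = (n + 1) * n.choose j := rfl
    rw [hch]
    push_cast
    have hne : (n : ℝ) + 1 ≠ 0 := by positivity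
    field_simp
  have hbot : Tendsto (fun z => G (stdCdf z)) atBot (𝓝 (-(1 / (n + 1 : ℝ)) * K)) := by
    have hc : ContinuousAt G 0 := by
      apply Continuous.continuousAt
      apply Continuous.mul continuous_const
      exact continuous_finset_sum _ fun j _ => S_continuous (j + 1) (n + 1)
    have := hc.tendsto.comp tendsto_stdCdf_atBot
    have hG0 : G 0 = -(1 / (n + 1 : ℝ)) * K := by
      rw [hG]
      simp only
      rw [Finset.sum_congr rfl fun j _ => S_zero_val (j + 1) (n + 1) (by omega)]
      simp
    rwa [hG0] at this
  have htop : Tendsto (fun z => G (stdCdf z)) atTop (𝓝 0) := by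
    have hc : ContinuousAt G 1 := by
      apply Continuous.continuousAt
      apply Continuous.mul continuous_const
      exact continuous_finset_sum _ fun j _ => S_continuous (j + 1) (n + 1)
    have := hc.tendsto.comp tendsto_stdCdf_atTop
    have hG1 : G 1 = 0 := by
      rw [hG]
      simp only
      rw [Finset.sum_congr rfl fun j hj => S_one_val (j + 1) (n + 1)
        (by have := Finset.mem_range.1 hj; omega)]
      simp
    rwa [hG1] at this
  have := MeasureTheory.integral_of_hasDerivAt_of_tendsto hderiv
    (S_comp_integrable K n (by omega)) hbot htop
  rw [this]
  field_simp
  ring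

lemma single_crossing (h hd : ℝ → ℝ) (D₁ D₂ : ℝ) (a b k l : ℕ)
    (hD₁ : 0 < D₁) (hD₂ : 0 < D₂) (ha : 1 ≤ a) (hb : 1 ≤ b)
    (hderiv : ∀ t, HasDerivAt h (hd t) t)
    (hdeq : ∀ t, hd t = t ^ k * (1 - t) ^ l * (D₁ - D₂ * (t ^ a * (1 - t) ^ b)))
    (h0 : h 0 = 0) (h1 : h 1 = 0) :
    ∃ c t₁, 0 < t₁ ∧ t₁ < c ∧ c < 1 ∧ 0 < h t₁ ∧
      (∀ t, 0 ≤ t → t ≤ c → 0 ≤ h t) ∧ (∀ t, c ≤ t → t ≤ 1 → h t ≤ 0) := by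
  obtain ⟨a', rfl⟩ : ∃ a', a = a' + 1 := ⟨a - 1, by omega⟩
  obtain ⟨b', rfl⟩ : ∃ b', b = b' + 1 := ⟨b - 1, by omega⟩
  set u : ℝ → ℝ := fun t => t ^ (a' + 1) * (1 - t) ^ (b' + 1) with hu
  set ψ : ℝ → ℝ := fun t => D₁ - D₂ * u t with hψ
  have hcont_h : Continuous h := by
    refine continuous_iff_continuousAt.2 fun x => (hderiv x).continuousAt
  have hcont_ψ : Continuous ψ := by fun_prop
  have hu_deriv : ∀ t, HasDerivAt u
      (t ^ a' * (1 - t) ^ b' * ((a' + 1) - (a' + b' + 2) * t)) t := by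
    intro t
    have h1' : HasDerivAt (fun t : ℝ => t ^ (a' + 1)) ((a' + 1) * t ^ a') t := by
      simpa using hasDerivAt_pow (a' + 1) t
    have h2' : HasDerivAt (fun t : ℝ => (1 - t) ^ (b' + 1))
        (((b' + 1 : ℕ) : ℝ) * (1 - t) ^ b' * (-1)) t := by
      have := (hasDerivAt_pow (b' + 1) (1 - t)).comp t ((hasDerivAt_id t).const_sub 1)
      exact this
    have := h1'.mul h2'
    refine this.congr_deriv (Eq.symm ?_)
    push_cast
    ring
  set μ : ℝ := (a' + 1) / (a' + b' + 2) with hμ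
  have hμ0 : 0 < μ := by positivity
  have hμ1 : μ < 1 := by
    rw [hμ, div_lt_one (by positivity)]
    have : (0:ℝ) ≤ b' := by positivity
    linarith
  -- u strict mono on [0, μ], strict anti on [μ, 1]
  have hu_mono : StrictMonoOn u (Icc 0 μ) := by
    apply strictMonoOn_of_hasDerivWithinAt_pos (convex_Icc 0 μ) (by fun_prop)
    · intro t ht
      exact ((hu_deriv t).hasDerivWithinAt)
    · intro t ht
      rw [interior_Icc] at ht
      obtain ⟨ht0, htμ⟩ := ht
      have ht1 : t < 1 := lt_trans htμ hμ1
      have hlast : (a' + 1 : ℝ) - (a' + b' + 2) * t > 0 := by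
        rw [hμ, lt_div_iff₀ (by positivity)] at htμ
        linarith
      have hp : (0:ℝ) < t ^ a' * (1 - t) ^ b' := by
        have h1t : (0:ℝ) < 1 - t := by linarith
        positivity
      exact mul_pos hp hlast
  have hu_anti : StrictAntiOn u (Icc μ 1) := by
    apply strictAntiOn_of_hasDerivWithinAt_neg (convex_Icc μ 1) (by fun_prop)
    · intro t ht
      exact ((hu_deriv t).hasDerivWithinAt)
    · intro t ht
      rw [interior_Icc] at ht
      obtain ⟨htμ, ht1⟩ := ht
      have ht0 : 0 < t := lt_trans hμ0 htμ
      have hneg : (a' + 1 : ℝ) - (a' + b' + 2) * t < 0 := by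
        rw [hμ, div_lt_iff₀ (by positivity)] at htμ
        linarith
      have hpos : (0:ℝ) < t ^ a' * (1 - t) ^ b' := by
        have : (0:ℝ) < 1 - t := by linarith
        positivity
      nlinarith
  have hψ0 : ψ 0 = D₁ := by simp [hψ, hu]
  have hψ1 : ψ 1 = D₁ := by simp [hψ, hu]
  -- h' positivity transfer
  have hd_pos : ∀ t, 0 < t → t < 1 → 0 < ψ t → 0 < hd t := by
    intro t ht0 ht1 hψt
    rw [hdeq t]
    have : (0:ℝ) < 1 - t := by linarith
    have hfac : (0:ℝ) < t ^ k * (1 - t) ^ l := by positivity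
    have : ψ t = D₁ - D₂ * (t ^ (a' + 1) * (1 - t) ^ (b' + 1)) := rfl
    nlinarith [hψt]
  have hd_neg : ∀ t, 0 < t → t < 1 → ψ t < 0 → hd t < 0 := by
    intro t ht0 ht1 hψt
    rw [hdeq t]
    have : (0:ℝ) < 1 - t := by linarith
    have hfac : (0:ℝ) < t ^ k * (1 - t) ^ l := by positivity
    have : ψ t = D₁ - D₂ * (t ^ (a' + 1) * (1 - t) ^ (b' + 1)) := rfl
    nlinarith [hψt]
  -- case ψ μ ≥ 0 leads to contradiction
  have hψμ : ψ μ < 0 := by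
    by_contra hge
    push_neg at hge
    have hψpos : ∀ t ∈ Icc (0:ℝ) μ, t < μ → 0 < ψ t := by
      intro t ht htμ
      have := hu_mono ht (right_mem_Icc.2 hμ0.le) htμ
      have : ψ μ < ψ t := by
        simp only [hψ]
        nlinarith
      linarith
    have hmono1 : StrictMonoOn h (Icc 0 μ) := by
      apply strictMonoOn_of_hasDerivWithinAt_pos (convex_Icc 0 μ) hcont_h.continuousOn
      · intro t _; exact (hderiv t).hasDerivWithinAt
      · intro t ht
        rw [interior_Icc] at ht
        exact hd_pos t ht.1 (lt_trans ht.2 hμ1) (hψpos t ⟨ht.1.le, ht.2.le⟩ ht.2)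
    have hμpos : 0 < h μ := by
      have := hmono1 (left_mem_Icc.2 hμ0.le) (right_mem_Icc.2 hμ0.le) hμ0
      rwa [h0] at this
    have hmono2 : MonotoneOn h (Icc μ 1) := by
      apply monotoneOn_of_hasDerivWithinAt_nonneg (convex_Icc μ 1) hcont_h.continuousOn
      · intro t _; exact (hderiv t).hasDerivWithinAt
      · intro t ht
        rw [interior_Icc] at ht
        have hψt : 0 ≤ ψ t := by
          have hut : u t < u μ := hu_anti (left_mem_Icc.2 hμ1.le) ⟨ht.1.le, ht.2.le⟩ ht.1
          have hge' : 0 ≤ D₁ - D₂ * u μ := hge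
          simp only [hψ]
          nlinarith [hge']
        rw [hdeq t]
        have h1t : (0:ℝ) ≤ 1 - t := by linarith [ht.2]
        have ht0 : (0:ℝ) ≤ t := le_of_lt (lt_trans hμ0 ht.1)
        have : ψ t = D₁ - D₂ * (t ^ (a' + 1) * (1 - t) ^ (b' + 1)) := rfl
        nlinarith [pow_nonneg ht0 k, pow_nonneg h1t l, mul_nonneg (pow_nonneg ht0 k) (pow_nonneg h1t l)]
    have : h μ ≤ h 1 := hmono2 (left_mem_Icc.2 hμ1.le) (right_mem_Icc.2 hμ1.le) hμ1.le
    rw [h1] at this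
    linarith
  -- main case: ψ μ < 0
  have hψanti : StrictAntiOn ψ (Icc 0 μ) := by
    intro x hx y hy hxy
    have := hu_mono hx hy hxy
    simp only [hψ]
    nlinarith
  have hψmono : StrictMonoOn ψ (Icc μ 1) := by
    intro x hx y hy hxy
    have := hu_anti hx hy hxy
    simp only [hψ]
    nlinarith
  obtain ⟨t₁, ht₁mem, ht₁⟩ : ∃ t₁ ∈ Ioo (0:ℝ) μ, ψ t₁ = 0 := by
    have hsub := intermediate_value_Ioo' hμ0.le hcont_ψ.continuousOn
    have : (0:ℝ) ∈ Ioo (ψ μ) (ψ 0) := ⟨hψμ, by rw [hψ0]; exact hD₁⟩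
    obtain ⟨t₁, hmem, heq⟩ := hsub this
    exact ⟨t₁, hmem, heq⟩
  obtain ⟨t₂, ht₂mem, ht₂⟩ : ∃ t₂ ∈ Ioo μ 1, ψ t₂ = 0 := by
    have hsub := intermediate_value_Ioo hμ1.le hcont_ψ.continuousOn
    have : (0:ℝ) ∈ Ioo (ψ μ) (ψ 1) := ⟨hψμ, by rw [hψ1]; exact hD₁⟩
    obtain ⟨t₂, hmem, heq⟩ := hsub this
    exact ⟨t₂, hmem, heq⟩
  obtain ⟨ht₁0, ht₁μ⟩ := ht₁mem
  obtain ⟨ht₂μ, ht₂1⟩ := ht₂mem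
  have ht₁1 : t₁ < 1 := lt_trans ht₁μ hμ1
  have ht₂0 : 0 < t₂ := lt_trans hμ0 ht₂μ
  have ht₁t₂ : t₁ < t₂ := lt_trans ht₁μ ht₂μ
  -- sign facts for ψ
  have hψ_pos1 : ∀ t, 0 ≤ t → t < t₁ → 0 < ψ t := by
    intro t ht0 htt₁
    have := hψanti ⟨ht0, le_of_lt (lt_trans htt₁ ht₁μ)⟩ ⟨ht₁0.le, ht₁μ.le⟩ htt₁
    rwa [ht₁] at this
  have hψ_neg : ∀ t, t₁ < t → t < t₂ → ψ t < 0 := by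
    intro t htl htr
    rcases le_or_gt t μ with hcase | hcase
    · have := hψanti ⟨ht₁0.le, ht₁μ.le⟩ ⟨le_trans ht₁0.le (le_of_lt htl), hcase⟩ htl
      rwa [ht₁] at this
    · have := hψmono ⟨hcase.le, le_of_lt (lt_trans htr ht₂1)⟩ ⟨ht₂μ.le, ht₂1.le⟩ htr
      rwa [ht₂] at this
  have hψ_pos2 : ∀ t, t₂ < t → t ≤ 1 → 0 < ψ t := by
    intro t htl htr
    have := hψmono ⟨ht₂μ.le, ht₂1.le⟩ ⟨le_trans ht₂μ.le (le_of_lt htl), htr⟩ htl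
    rwa [ht₂] at this
  -- h monotonicity on the three intervals
  have hmonoA : StrictMonoOn h (Icc 0 t₁) := by
    apply strictMonoOn_of_hasDerivWithinAt_pos (convex_Icc 0 t₁) hcont_h.continuousOn
    · intro t _; exact (hderiv t).hasDerivWithinAt
    · intro t ht
      rw [interior_Icc] at ht
      exact hd_pos t ht.1 (lt_trans ht.2 ht₁1) (hψ_pos1 t ht.1.le ht.2)
  have hantiB : StrictAntiOn h (Icc t₁ t₂) := by
    apply strictAntiOn_of_hasDerivWithinAt_neg (convex_Icc t₁ t₂) hcont_h.continuousOn
    · intro t _; exact (hderiv t).hasDerivWithinAt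
    · intro t ht
      rw [interior_Icc] at ht
      exact hd_neg t (lt_trans ht₁0 ht.1) (lt_trans ht.2 ht₂1) (hψ_neg t ht.1 ht.2)
  have hmonoC : StrictMonoOn h (Icc t₂ 1) := by
    apply strictMonoOn_of_hasDerivWithinAt_pos (convex_Icc t₂ 1) hcont_h.continuousOn
    · intro t _; exact (hderiv t).hasDerivWithinAt
    · intro t ht
      rw [interior_Icc] at ht
      exact hd_pos t (lt_trans ht₂0 ht.1) ht.2 (hψ_pos2 t ht.1 ht.2.le)
  have hht₁ : 0 < h t₁ := by
    have := hmonoA (left_mem_Icc.2 ht₁0.le) (right_mem_Icc.2 ht₁0.le) ht₁0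
    rwa [h0] at this
  have hht₂ : h t₂ < 0 := by
    have := hmonoC (left_mem_Icc.2 ht₂1.le) (right_mem_Icc.2 ht₂1.le) ht₂1
    rwa [h1] at this
  obtain ⟨c, hcmem, hc⟩ : ∃ c ∈ Ioo t₁ t₂, h c = 0 := by
    have hsub := intermediate_value_Ioo' ht₁t₂.le hcont_h.continuousOn
    have : (0:ℝ) ∈ Ioo (h t₂) (h t₁) := ⟨hht₂, hht₁⟩
    obtain ⟨c, hmem, heq⟩ := hsub this
    exact ⟨c, hmem, heq⟩
  obtain ⟨hct₁, hct₂⟩ := hcmem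
  refine ⟨c, t₁, ht₁0, hct₁, lt_trans hct₂ ht₂1, hht₁, ?_, ?_⟩
  · intro t ht0 htc
    rcases le_or_gt t t₁ with hcase | hcase
    · have := hmonoA.monotoneOn (left_mem_Icc.2 ht₁0.le) ⟨ht0, hcase⟩ ht0
      rwa [h0] at this
    · have := hantiB.antitoneOn ⟨hcase.le, le_trans htc hct₂.le⟩
        ⟨hct₁.le, hct₂.le⟩ htc
      rwa [hc] at this
  · intro t htc ht1
    rcases le_or_gt t t₂ with hcase | hcase
    · have := hantiB.antitoneOn ⟨hct₁.le, hct₂.le⟩ ⟨le_trans hct₁.le htc, hcase⟩ htc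
      rwa [hc] at this
    · have := hmonoC.monotoneOn ⟨hcase.le, ht1⟩ (right_mem_Icc.2 ht₂1.le) ht1
      rwa [h1] at this

lemma binCDF_eq_S (K n : ℕ) (p : ℝ) : binCDF ((K : ℤ) - 1) n p = S K n p := by
  unfold binCDF S
  norm_num

lemma stdCdf_surj {y : ℝ} (h0 : 0 < y) (h1 : y < 1) : ∃ z, stdCdf z = y := by
  obtain ⟨zlo, hzlo⟩ := (tendsto_stdCdf_atBot.eventually_lt_const h0).exists
  obtain ⟨zhi, hzhi⟩ := (tendsto_stdCdf_atTop.eventually_const_lt h1).exists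
  have hle : zlo ≤ zhi := by
    by_contra hlt
    push_neg at hlt
    have := stdCdf_mono hlt.le
    linarith
  have := intermediate_value_Icc hle stdCdf_continuous.continuousOn
  obtain ⟨z, _, hz⟩ := this ⟨hzlo.le, hzhi.le⟩
  exact ⟨z, hz⟩

lemma stdPdf_weight (Θ z : ℝ) : stdPdf z = stdPdf (z - Θ) * Real.exp (Θ ^ 2 / 2 - Θ * z) := by
  unfold stdPdf
  rw [mul_assoc, ← Real.exp_add]
  congr 1
  ring

lemma S_shift_integrable (K n : ℕ) (hK : K ≤ n + 1) (Θ : ℝ) :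
    Integrable (fun z => S K n (stdCdf (z - Θ)) * stdPdf z) := by
  apply Integrable.mono' stdPdf_integrable
  · exact (((S_continuous K n).comp (stdCdf_continuous.comp
      (continuous_id.sub continuous_const))).mul stdPdf_continuous).aestronglyMeasurable
  · refine Eventually.of_forall fun z => ?_
    rw [Real.norm_eq_abs, abs_mul, abs_of_nonneg (stdPdf_pos z).le,
      abs_of_nonneg (S_nonneg K n (stdCdf_nonneg _) (stdCdf_le_one _))]
    have := S_le_one K n hK (stdCdf_nonneg (z - Θ)) (stdCdf_le_one (z - Θ))
    nlinarith [stdPdf_pos z]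

theorem power_increasing_in_m (α Θ : ℝ) (hα : α ∈ Set.Ioo (0 : ℝ) 1) (hΘ : 0 < Θ)
    (m₁ m₂ K₁ K₂ : ℕ) (hm₁ : 0 < m₁) (hm : m₁ < m₂)
    (hK₁ : (K₁ : ℝ) = (m₁ : ℝ) * α) (hK₂ : (K₂ : ℝ) = (m₂ : ℝ) * α)
    (hK₁pos : 1 ≤ K₁) (hK₂pos : 1 ≤ K₂) :
    power Θ m₁ α < power Θ m₂ α := by
  obtain ⟨hα0, hα1⟩ := hα
  have hm₂ : 0 < m₂ := lt_trans hm₁ hm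
  have hm₁R : (0:ℝ) < m₁ := by exact_mod_cast hm₁
  have hm₂R : (0:ℝ) < m₂ := by exact_mod_cast hm₂
  have hmR : (m₁:ℝ) < m₂ := by exact_mod_cast hm
  -- basic inequalities
  have hK₁m : K₁ < m₁ := by
    have : (K₁:ℝ) < m₁ := by rw [hK₁]; nlinarith
    exact_mod_cast this
  have hK₂m : K₂ < m₂ := by
    have : (K₂:ℝ) < m₂ := by rw [hK₂]; nlinarith
    exact_mod_cast this
  have hK12 : K₁ < K₂ := by
    have : (K₁:ℝ) < K₂ := by rw [hK₁, hK₂]; nlinarith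
    exact_mod_cast this
  have hgap : m₁ - K₁ < m₂ - K₂ := by
    have h1 : (m₁:ℝ) - K₁ < (m₂:ℝ) - K₂ := by rw [hK₁, hK₂]; nlinarith
    rw [← Nat.cast_sub hK₁m.le, ← Nat.cast_sub hK₂m.le] at h1
    exact_mod_cast h1
  -- set up notation
  set n₁ := m₁ - 1 with hn₁
  set n₂ := m₂ - 1 with hn₂
  have hK₁n : K₁ ≤ n₁ := by omega
  have hK₂n : K₂ ≤ n₂ := by omega
  set k₁ := K₁ - 1 with hk₁def
  set k₂ := K₂ - 1 with hk₂def
  have hk₁ : k₁ + 1 = K₁ := by omega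
  have hk₂ : k₂ + 1 = K₂ := by omega
  set a := k₂ - k₁ with hadef
  set l := n₁ - K₁ with hldef
  set b := n₂ - K₂ - l with hbdef
  have ha1 : 1 ≤ a := by omega
  have hb1 : 1 ≤ b := by omega
  have hea : k₂ = k₁ + a := by omega
  have heb : n₂ - K₂ = l + b := by omega
  set D₁ : ℝ := (((n₁ - k₁) * n₁.choose k₁ : ℕ) : ℝ) with hD₁def
  set D₂ : ℝ := (((n₂ - k₂) * n₂.choose k₂ : ℕ) : ℝ) with hD₂def
  have hD₁pos : 0 < D₁ := by
    rw [hD₁def]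
    have : 0 < (n₁ - k₁) * n₁.choose k₁ := Nat.mul_pos (by omega) (Nat.choose_pos (by omega))
    exact_mod_cast this
  have hD₂pos : 0 < D₂ := by
    rw [hD₂def]
    have : 0 < (n₂ - k₂) * n₂.choose k₂ := Nat.mul_pos (by omega) (Nat.choose_pos (by omega))
    exact_mod_cast this
  -- the difference function and its derivative
  set h : ℝ → ℝ := fun t => S K₂ n₂ t - S K₁ n₁ t with hh
  set hd : ℝ → ℝ := fun t =>
    -D₂ * t ^ k₂ * (1 - t) ^ (n₂ - K₂) - (-D₁ * t ^ k₁ * (1 - t) ^ (n₁ - K₁)) with hhd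
  have hderiv : ∀ t, HasDerivAt h (hd t) t := by
    intro t
    have h₂ := hasDerivAt_S k₂ n₂ (by omega) t
    have h₁ := hasDerivAt_S k₁ n₁ (by omega) t
    rw [hk₂] at h₂
    rw [hk₁] at h₁
    have := h₂.sub h₁
    exact this
  have hdeq : ∀ t, hd t = t ^ k₁ * (1 - t) ^ l * (D₁ - D₂ * (t ^ a * (1 - t) ^ b)) := by
    intro t
    rw [hhd]
    simp only
    rw [hea, heb, show n₁ - K₁ = l from hldef.symm]
    ring
  have hzero : h 0 = 0 := by
    rw [hh]; simp only
    rw [S_zero_val K₂ n₂ (by omega), S_zero_val K₁ n₁ (by omega)]; ring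
  have hone : h 1 = 0 := by
    rw [hh]; simp only
    rw [S_one_val K₂ n₂ hK₂n, S_one_val K₁ n₁ hK₁n]; ring
  obtain ⟨c, t₁, ht₁0, ht₁c, hc1, hht₁, hpos, hneg⟩ :=
    single_crossing h hd D₁ D₂ a b k₁ l hD₁pos hD₂pos ha1 hb1 hderiv hdeq hzero hone
  have hc0 : 0 < c := lt_trans ht₁0 ht₁c
  -- z-space points
  obtain ⟨zc, hzc⟩ : ∃ z, stdCdf (z - Θ) = c := by
    obtain ⟨w, hw⟩ := stdCdf_surj hc0 hc1
    exact ⟨w + Θ, by rw [add_sub_cancel_right]; exact hw⟩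
  obtain ⟨z₁, hz₁⟩ : ∃ z, stdCdf (z - Θ) = t₁ := by
    obtain ⟨w, hw⟩ := stdCdf_surj ht₁0 (lt_trans ht₁c hc1)
    exact ⟨w + Θ, by rw [add_sub_cancel_right]; exact hw⟩
  have hz₁zc : z₁ < zc := by
    by_contra hlt
    push_neg at hlt
    have := stdCdf_mono (by linarith : zc - Θ ≤ z₁ - Θ)
    rw [hzc, hz₁] at this
    linarith
  -- integrability
  have IA₁ := S_shift_integrable K₁ n₁ (by omega) Θ
  have IA₂ := S_shift_integrable K₂ n₂ (by omega) Θ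
  have IB₁ : Integrable (fun z => S K₁ n₁ (stdCdf (z - Θ)) * stdPdf (z - Θ)) :=
    (S_comp_integrable K₁ n₁ (by omega)).comp_sub_right Θ
  have IB₂ : Integrable (fun z => S K₂ n₂ (stdCdf (z - Θ)) * stdPdf (z - Θ)) :=
    (S_comp_integrable K₂ n₂ (by omega)).comp_sub_right Θ
  -- the zero integral
  have hn₁cast : ((n₁ : ℝ) + 1) = (m₁ : ℝ) := by
    rw [hn₁]; push_cast [Nat.cast_sub hm₁]; ring
  have hn₂cast : ((n₂ : ℝ) + 1) = (m₂ : ℝ) := by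
    rw [hn₂]; push_cast [Nat.cast_sub hm₂]; ring
  have JB₁ : ∫ z, S K₁ n₁ (stdCdf (z - Θ)) * stdPdf (z - Θ) = α := by
    have := integral_sub_right_eq_self (μ := volume)
      (fun z => S K₁ n₁ (stdCdf z) * stdPdf z) Θ
    rw [this, integral_S_comp K₁ n₁ hK₁pos hK₁n, hn₁cast]
    rw [hK₁]; field_simp
  have JB₂ : ∫ z, S K₂ n₂ (stdCdf (z - Θ)) * stdPdf (z - Θ) = α := by
    have := integral_sub_right_eq_self (μ := volume)
      (fun z => S K₂ n₂ (stdCdf z) * stdPdf z) Θ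
    rw [this, integral_S_comp K₂ n₂ hK₂pos hK₂n, hn₂cast]
    rw [hK₂]; field_simp
  -- the positive function
  set rc : ℝ := Real.exp (Θ ^ 2 / 2 - Θ * zc) with hrc
  set f : ℝ → ℝ := fun z =>
    h (stdCdf (z - Θ)) * (Real.exp (Θ ^ 2 / 2 - Θ * z) - rc) * stdPdf (z - Θ) with hf
  have f_eq : f = fun z =>
      (S K₂ n₂ (stdCdf (z - Θ)) * stdPdf z - S K₁ n₁ (stdCdf (z - Θ)) * stdPdf z)
      - rc * (S K₂ n₂ (stdCdf (z - Θ)) * stdPdf (z - Θ)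
              - S K₁ n₁ (stdCdf (z - Θ)) * stdPdf (z - Θ)) := by
    funext z
    rw [hf]
    simp only [hh]
    rw [stdPdf_weight Θ z]
    ring
  have IAd : Integrable (fun z => S K₂ n₂ (stdCdf (z - Θ)) * stdPdf z
      - S K₁ n₁ (stdCdf (z - Θ)) * stdPdf z) := IA₂.sub IA₁
  have IBd : Integrable (fun z => S K₂ n₂ (stdCdf (z - Θ)) * stdPdf (z - Θ)
      - S K₁ n₁ (stdCdf (z - Θ)) * stdPdf (z - Θ)) := IB₂.sub IB₁
  have IBd' : Integrable (fun z => rc * (S K₂ n₂ (stdCdf (z - Θ)) * stdPdf (z - Θ)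
      - S K₁ n₁ (stdCdf (z - Θ)) * stdPdf (z - Θ))) := IBd.const_mul rc
  have f_int : Integrable f := by
    rw [f_eq]
    exact IAd.sub IBd'
  have f_integral : ∫ z, f z = (∫ z, S K₂ n₂ (stdCdf (z - Θ)) * stdPdf z)
      - (∫ z, S K₁ n₁ (stdCdf (z - Θ)) * stdPdf z) := by
    rw [f_eq]
    rw [integral_sub IAd IBd', integral_sub IA₂ IA₁, integral_const_mul,
      integral_sub IB₂ IB₁, JB₁, JB₂]
    ring
  -- nonnegativity of f
  have f_nonneg : ∀ z, 0 ≤ f z := by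
    intro z
    rw [hf]
    simp only
    rcases le_total z zc with hz | hz
    · have ht : stdCdf (z - Θ) ≤ c := by
        rw [← hzc]; exact stdCdf_mono (by linarith)
      have h1 : 0 ≤ h (stdCdf (z - Θ)) := hpos _ (stdCdf_nonneg _) ht
      have h2 : rc ≤ Real.exp (Θ ^ 2 / 2 - Θ * z) := by
        rw [hrc]; apply Real.exp_le_exp.2
        have := mul_le_mul_of_nonneg_left hz hΘ.le
        linarith
      have := stdPdf_pos (z - Θ)
      apply mul_nonneg (mul_nonneg h1 (by linarith)) this.le
    · have ht : c ≤ stdCdf (z - Θ) := by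
        rw [← hzc]; exact stdCdf_mono (by linarith)
      have h1 : h (stdCdf (z - Θ)) ≤ 0 := hneg _ ht (stdCdf_le_one _)
      have h2 : Real.exp (Θ ^ 2 / 2 - Θ * z) ≤ rc := by
        rw [hrc]; apply Real.exp_le_exp.2
        have := mul_le_mul_of_nonneg_left hz hΘ.le
        linarith
      have := stdPdf_pos (z - Θ)
      have hfac : (0:ℝ) ≤ h (stdCdf (z - Θ)) * (Real.exp (Θ ^ 2 / 2 - Θ * z) - rc) :=
        mul_nonneg_iff.2 (Or.inr ⟨h1, by linarith⟩)
      exact mul_nonneg hfac this.le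
  -- strict positivity at z₁
  have f_pos : 0 < f z₁ := by
    rw [hf]
    simp only
    rw [hz₁]
    have h2 : rc < Real.exp (Θ ^ 2 / 2 - Θ * z₁) := by
      rw [hrc]; apply Real.exp_lt_exp.2
      have := mul_lt_mul_of_pos_left hz₁zc hΘ
      linarith
    have := stdPdf_pos (z₁ - Θ)
    apply mul_pos (mul_pos hht₁ (by linarith)) this
  -- continuity of f
  have f_cont : Continuous f := by
    rw [hf]
    apply Continuous.mul
    apply Continuous.mul
    · exact ((S_continuous K₂ n₂).sub (S_continuous K₁ n₁)).comp
        (stdCdf_continuous.comp (continuous_id.sub continuous_const))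
    · exact (Real.continuous_exp.comp (continuous_const.sub
        (continuous_const.mul continuous_id))).sub continuous_const
    · exact stdPdf_continuous.comp (continuous_id.sub continuous_const)
  -- positivity of the integral
  have hint_pos : 0 < ∫ z, f z := by
    rw [integral_pos_iff_support_of_nonneg f_nonneg f_int]
    have hU : IsOpen (f ⁻¹' (Set.Ioi 0)) := isOpen_Ioi.preimage f_cont
    have hne : (f ⁻¹' (Set.Ioi 0)).Nonempty := ⟨z₁, f_pos⟩
    have hsub : f ⁻¹' (Set.Ioi 0) ⊆ Function.support f := fun x hx => ne_of_gt hx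
    exact lt_of_lt_of_le (hU.measure_pos volume hne) (measure_mono hsub)
  -- rewrite power
  have hpow₁ : power Θ m₁ α = ∫ z, S K₁ n₁ (stdCdf (z - Θ)) * stdPdf z := by
    unfold power
    have hfl : ⌊(m₁ : ℝ) * α⌋ = (K₁ : ℤ) := by rw [← hK₁]; exact Int.floor_natCast K₁
    rw [hfl]
    congr 1
    funext z
    rw [binCDF_eq_S]
  have hpow₂ : power Θ m₂ α = ∫ z, S K₂ n₂ (stdCdf (z - Θ)) * stdPdf z := by
    unfold power
    have hfl : ⌊(m₂ : ℝ) * α⌋ = (K₂ : ℤ) := by rw [← hK₂]; exact Int.floor_natCast K₂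
    rw [hfl]
    congr 1
    funext z
    rw [binCDF_eq_S]
  rw [hpow₁, hpow₂]
  linarith [f_integral ▸ hint_pos]
end
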